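/- Let K be a field and define the 2×2 matrix A(z) = A₀ + z·A₁ + z²·A₂ over K(x,y,t,w), where A₂ = [[1,0],[0,0]], A₀ = [[t + x - xy, -wx],[w⁻¹(t + x - ty - 2xy + xy²), x(y-1)]], and A₁ = [[y - x + x/y - 1 - t/x, w],[w⁻¹(y - 2x - 1 + xy + x/y - t/x), 1]]. Then det A(z) = z³. -/

import Mathlib

open Matrix

/-- The q-Painlevé I Lax matrix A(z) = A₀ + z A₁ + z² A₂ has
determinant z³. -/
theorem qP1_lax_det {K : Type*} [Field K]
    (x y t w : K) (hx : x ≠ 0) (hy : y ≠ 0) (hw : w ≠ 0) (z : K) :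
    (!![(t + x - x*y) + z*(y - x + x/y - 1 - t/x) + z^2,
        (-(w*x)) + z*w;
        w⁻¹*(t + x - t*y - 2*x*y + x*y^2) + z*(w⁻¹*(y - 2*x - 1 + x*y + x/y - t/x)),
        x*(y - 1) + z] : Matrix (Fin 2) (Fin 2) K).det = z^3 := by
  rw [det_fin_two_of]
  field_simp
  ring_nf
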